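/- Let f(x) = f_0 x + f_1 x^q + ... + f_{n-1} x^{q^{n-1}} be a linearized polynomial over F_{q^n} whose associated F_q-linear map on F_{q^n} has rank r ≥ 1. Then there exist two subsets S_1 = {a_1, ..., a_r} and S_2 = {b_1, ..., b_r} of F_{q^n}, each linearly independent over F_q, such that for every integer i with 0 ≤ i ≤ n−1, f_i = Σ_{j=1}^{r} b_j^{q^i} · a_j. -/

import Mathlib

open Module Polynomial

section aux

variable {Fq Fqn : Type*} [Field Fq] [Fintype Fq] [Field Fqn] [Fintype Fqn] [Algebra Fq Fqn]

/-- The `i`-th Frobenius power `y ↦ y ^ q ^ i` as an `Fq`-linear map on `Fqn`. -/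
noncomputable def frobPow (Fq : Type*) {Fqn : Type*} [Field Fq] [Fintype Fq] [Field Fqn]
    [Fintype Fqn] [Algebra Fq Fqn] (i : ℕ) : Fqn →ₗ[Fq] Fqn where
  toFun y := y ^ (Fintype.card Fq) ^ i
  map_add' x y := by
    obtain ⟨k, hpk, hcard⟩ := FiniteField.card Fq (ringChar Fq)
    haveI : Fact (ringChar Fq).Prime := ⟨hpk⟩
    haveI : CharP Fqn (ringChar Fq) :=
      charP_of_injective_algebraMap (algebraMap Fq Fqn).injective (ringChar Fq)
    rw [hcard, ← pow_mul]
    exact add_pow_char_pow x y _ _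
  map_smul' c y := by
    simp only [Algebra.smul_def, RingHom.id_apply, mul_pow, ← map_pow,
      FiniteField.pow_card_pow]

lemma frobPow_apply (Fq : Type*) {Fqn : Type*} [Field Fq] [Fintype Fq] [Field Fqn]
    [Fintype Fqn] [Algebra Fq Fqn] (i : ℕ) (y : Fqn) :
    frobPow Fq i y = y ^ (Fintype.card Fq) ^ i := rfl

omit [Algebra Fq Fqn] in
/-- Uniqueness of q-polynomial coefficients. -/
lemma qpoly_coeff_eq_zero {n : ℕ} (hcard : Fintype.card Fqn = (Fintype.card Fq) ^ n)
    (g : Fin n → Fqn) (hg : ∀ x : Fqn, ∑ i : Fin n, g i * x ^ (Fintype.card Fq) ^ (i : ℕ) = 0) :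
    ∀ i, g i = 0 := by
  rcases Nat.eq_zero_or_pos n with rfl | hn
  · exact fun i => i.elim0
  set q := Fintype.card Fq with hq
  have hq1 : 1 < q := Fintype.one_lt_card
  set P : Fqn[X] := ∑ i : Fin n, C (g i) * X ^ (q ^ (i : ℕ)) with hP
  have hdeg : P.natDegree < Fintype.card Fqn := by
    rw [hcard]
    refine lt_of_le_of_lt (natDegree_sum_le _ _) ?_
    rw [Finset.fold_max_lt]
    refine ⟨pow_pos (by omega) n, fun i _ => ?_⟩
    refine lt_of_le_of_lt (natDegree_C_mul_X_pow_le _ _) ?_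
    exact Nat.pow_lt_pow_right hq1 i.isLt
  have hP0 : P = 0 := by
    apply eq_zero_of_natDegree_lt_card_of_eval_eq_zero' P Finset.univ
    · intro x _
      simpa [P, eval_finset_sum] using hg x
    · simpa using hdeg
  intro i
  have := congrArg (fun Q => Polynomial.coeff Q (q ^ (i : ℕ))) hP0
  simp only [hP, finset_sum_coeff, coeff_C_mul, coeff_X_pow, coeff_zero] at this
  rw [Finset.sum_eq_single i] at this
  · simpa using this
  · intro j _ hj
    have : q ^ (i : ℕ) ≠ q ^ (j : ℕ) := fun h => hj (Fin.ext
      (Nat.pow_right_injective (by omega) h.symm))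
    simp [this]
  · simp

/-- Every element fixed by the `q`-power Frobenius lies in the image of `Fq`. -/
lemma fixed_mem_range_algebraMap (z : Fqn) (hz : z ^ (Fintype.card Fq) = z) :
    z ∈ LinearMap.range (Algebra.linearMap Fq Fqn) := by
  classical
  set q := Fintype.card Fq with hq
  have hq1 : 1 < q := Fintype.one_lt_card
  set P : Fqn[X] := X ^ q - X with hPdef
  have hP0 : P ≠ 0 := FiniteField.X_pow_card_sub_X_ne_zero Fqn hq1
  have hPdeg : P.natDegree = q := FiniteField.X_pow_card_sub_X_natDegree_eq Fqn hq1
  set T : Finset Fqn := Finset.univ.image (algebraMap Fq Fqn) with hT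
  have hcardT : T.card = q := by
    rw [hT, Finset.card_image_of_injective _ (algebraMap Fq Fqn).injective,
      Finset.card_univ]
  have hsub : T ⊆ P.roots.toFinset := by
    intro w hw
    rw [hT, Finset.mem_image] at hw
    obtain ⟨c, -, rfl⟩ := hw
    rw [Multiset.mem_toFinset, mem_roots hP0]
    simp only [P, IsRoot, eval_sub, eval_pow, eval_X, ← map_pow]
    rw [FiniteField.pow_card, sub_self]
  have hroots : P.roots.toFinset.card ≤ q := by
    calc P.roots.toFinset.card ≤ Multiset.card P.roots := Multiset.toFinset_card_le _
    _ ≤ P.natDegree := P.card_roots'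
    _ = q := hPdeg
  have hTeq : T = P.roots.toFinset :=
    Finset.eq_of_subset_of_card_le hsub (by rw [hcardT]; exact hroots)
  have hzmem : z ∈ P.roots.toFinset := by
    rw [Multiset.mem_toFinset, mem_roots hP0]
    simp [P, IsRoot, hz]
  rw [← hTeq, hT, Finset.mem_image] at hzmem
  obtain ⟨c, -, rfl⟩ := hzmem
  exact ⟨c, rfl⟩

end aux

/-- If the linearized polynomial `f(x) = Σ_{i<n} f_i x^{q^i}` over `F_{q^n}` induces an
`F_q`-linear map of rank `r ≥ 1`, then there are `F_q`-linearly independent families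
`a_1,…,a_r` and `b_1,…,b_r` in `F_{q^n}` with `f_i = Σ_j b_j^{q^i} a_j` for all `i`. -/
theorem linearized_poly_coeff_decomposition
    (Fq Fqn : Type*) [Field Fq] [Fintype Fq] [Field Fqn] [Fintype Fqn]
    [Algebra Fq Fqn] (n r : ℕ) (hn : Module.finrank Fq Fqn = n) (hr : 1 ≤ r)
    (f : Fin n → Fqn) (φ : Fqn →ₗ[Fq] Fqn)
    (hφ : ∀ x : Fqn, φ x = ∑ i : Fin n, f i * x ^ (Fintype.card Fq) ^ (i : ℕ))
    (hrank : Module.finrank Fq (LinearMap.range φ) = r) :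
    ∃ a b : Fin r → Fqn, LinearIndependent Fq a ∧ LinearIndependent Fq b ∧
      ∀ i : Fin n, f i = ∑ j : Fin r, b j ^ (Fintype.card Fq) ^ (i : ℕ) * a j := by
  classical
  set q := Fintype.card Fq with hqdef
  have hq1 : 1 < q := Fintype.one_lt_card
  have hcard : Fintype.card Fqn = q ^ n := by
    rw [card_eq_pow_finrank (K := Fq) (V := Fqn), hn]
  have hn1 : 1 ≤ n := by
    rw [← hn]
    exact Module.finrank_pos
  -- the "trace-like" map S
  set S : Fqn →ₗ[Fq] Fqn := ∑ i : Fin n, frobPow Fq (i : ℕ) with hSdef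
  have hS : ∀ y : Fqn, S y = ∑ i : Fin n, y ^ q ^ (i : ℕ) := by
    intro y
    simp [hSdef, frobPow_apply]
    rfl
  -- S is not identically zero
  have hSne : ∃ y : Fqn, S y ≠ 0 := by
    by_contra h
    push_neg at h
    have := qpoly_coeff_eq_zero (Fq := Fq) hcard (fun _ : Fin n => (1 : Fqn))
      (fun x => by simpa [hS] using h x) ⟨0, hn1⟩
    exact one_ne_zero this
  -- Θ b = (x ↦ S (b * x))
  set Θ : Fqn →ₗ[Fq] (Fqn →ₗ[Fq] Fqn) :=
    (LinearMap.llcomp Fq Fqn Fqn Fqn S) ∘ₗ (Algebra.lmul Fq Fqn).toLinearMap with hΘdef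
  have hΘ : ∀ b x : Fqn, Θ b x = S (b * x) := fun b x => rfl
  have hΘinj : Function.Injective Θ := by
    rw [injective_iff_map_eq_zero]
    intro b hb
    by_contra hb0
    obtain ⟨y, hy⟩ := hSne
    have : Θ b (b⁻¹ * y) = 0 := by rw [hb]; rfl
    rw [hΘ, ← mul_assoc, mul_inv_cancel₀ hb0, one_mul] at this
    exact hy this
  -- A c = algebraMap ∘ c
  set A : (Fqn →ₗ[Fq] Fq) →ₗ[Fq] (Fqn →ₗ[Fq] Fqn) :=
    LinearMap.llcomp Fq Fqn Fq Fqn (Algebra.linearMap Fq Fqn) with hAdef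
  have hA : ∀ (c : Fqn →ₗ[Fq] Fq) (x : Fqn), A c x = algebraMap Fq Fqn (c x) := fun c x => rfl
  have hAinj : Function.Injective A := by
    rw [injective_iff_map_eq_zero]
    intro c hc
    ext x
    have : A c x = 0 := by rw [hc]; rfl
    rw [hA] at this
    simpa using (algebraMap Fq Fqn).injective (by simpa using this)
  -- range Θ ≤ range A
  have hle : LinearMap.range Θ ≤ LinearMap.range A := by
    rintro - ⟨b, rfl⟩
    -- each value S (b * x) is fixed by Frobenius, hence comes from Fq
    have hfix : ∀ x : Fqn, Θ b x ∈ LinearMap.range (Algebra.linearMap Fq Fqn) := by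
      intro x
      apply fixed_mem_range_algebraMap
      rw [hΘ, hS]
      obtain ⟨k, hpk, hcq⟩ := FiniteField.card Fq (ringChar Fq)
      haveI : Fact (ringChar Fq).Prime := ⟨hpk⟩
      haveI : CharP Fqn (ringChar Fq) :=
        charP_of_injective_algebraMap (algebraMap Fq Fqn).injective (ringChar Fq)
      rw [hqdef, hcq, sum_pow_char_pow, ← hcq, ← hqdef]
      have hshift : ∀ i : Fin n, ((b * x) ^ q ^ (i : ℕ)) ^ q = (b * x) ^ q ^ ((i : ℕ) + 1) := by
        intro i
        rw [← pow_mul, pow_succ]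
      calc ∑ i : Fin n, ((b * x) ^ q ^ (i : ℕ)) ^ q
          = ∑ i : Fin n, (b * x) ^ q ^ (((i : ℕ) + 1) % n) := by
            refine Finset.sum_congr rfl fun i _ => ?_
            rw [hshift i]
            rcases Nat.lt_or_ge ((i : ℕ) + 1) n with h | h
            · rw [Nat.mod_eq_of_lt h]
            · have hin : (i : ℕ) + 1 = n := by omega
              rw [hin, Nat.mod_self, pow_zero, pow_one, ← hcard, FiniteField.pow_card]
        _ = ∑ i : Fin n, (b * x) ^ q ^ (i : ℕ) := by
            haveI : NeZero n := ⟨by omega⟩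
            rw [← Equiv.sum_comp (Equiv.addRight (1 : Fin n))
              (fun j : Fin n => (b * x) ^ q ^ (j : ℕ))]
            refine Finset.sum_congr rfl fun i _ => ?_
            have hv : ((i + 1 : Fin n) : ℕ) = ((i : ℕ) + 1) % n := by
              simp [Fin.add_def, Fin.val_one', Nat.add_mod]
            simp only [Equiv.coe_addRight, hv]
    choose cf hcf using fun x => hfix x
    simp only [Algebra.linearMap_apply] at hcf
    have hcflin : ∀ (x y : Fqn), cf (x + y) = cf x + cf y := by
      intro x y
      apply (algebraMap Fq Fqn).injective
      rw [map_add, hcf, hcf, hcf, map_add]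
    have hcfsmul : ∀ (t : Fq) (x : Fqn), cf (t • x) = t • cf x := by
      intro t x
      apply (algebraMap Fq Fqn).injective
      calc algebraMap Fq Fqn (cf (t • x)) = Θ b (t • x) := hcf _
        _ = t • Θ b x := map_smul _ t x
        _ = t • algebraMap Fq Fqn (cf x) := by rw [hcf]
        _ = algebraMap Fq Fqn (t • cf x) := by
            rw [smul_eq_mul, map_mul, ← Algebra.smul_def]
    refine ⟨⟨⟨cf, hcflin⟩, hcfsmul⟩, ?_⟩
    ext x
    exact hcf x
  -- equal ranges by dimension count
  have hrangeeq : LinearMap.range Θ = LinearMap.range A := by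
    apply Submodule.eq_of_le_of_finrank_le hle
    have h1 : Module.finrank Fq (LinearMap.range Θ) = n := by
      rw [LinearMap.finrank_range_of_inj hΘinj, hn]
    have h2 : Module.finrank Fq (LinearMap.range A) = n := by
      rw [LinearMap.finrank_range_of_inj hAinj, Subspace.dual_finrank_eq, hn]
    rw [h1, h2]
  -- basis of the range of φ
  set W := LinearMap.range φ with hWdef
  let β : Basis (Fin r) Fq W := finBasisOfFinrankEq Fq W hrank
  set a : Fin r → Fqn := fun j => (β j : Fqn) with hadef
  have ha : LinearIndependent Fq a :=
    β.linearIndependent.map' W.subtype (Submodule.ker_subtype W)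
  -- coordinate functionals
  set c : Fin r → (Fqn →ₗ[Fq] Fq) := fun j => (β.coord j) ∘ₗ φ.rangeRestrict with hcdef
  have hc : LinearIndependent Fq c := by
    have h1 : LinearIndependent Fq (β.dualBasis : Fin r → Module.Dual Fq W) :=
      β.dualBasis.linearIndependent
    have h2 := h1.map' φ.rangeRestrict.dualMap
      (LinearMap.ker_eq_bot.mpr (LinearMap.dualMap_injective_of_surjective
        φ.surjective_rangeRestrict))
    convert h2 using 1
    funext j
    ext x
    simp [hcdef, LinearMap.dualMap_apply, Basis.coe_dualBasis]
    all_goals rfl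
  have hdecomp : ∀ x : Fqn, φ x = ∑ j : Fin r, algebraMap Fq Fqn (c j x) * a j := by
    intro x
    conv_lhs => rw [show φ x = ((φ.rangeRestrict x : W) : Fqn) from rfl]
    rw [← β.sum_repr (φ.rangeRestrict x)]
    push_cast
    refine Finset.sum_congr rfl fun j _ => ?_
    rw [Algebra.smul_def]
    rfl
  -- pick b
  have hbex : ∀ j : Fin r, ∃ b : Fqn, Θ b = A (c j) := by
    intro j
    have : A (c j) ∈ LinearMap.range Θ := hrangeeq ▸ LinearMap.mem_range_self A (c j)
    exact this
  choose b hb using hbex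
  have hbli : LinearIndependent Fq b := by
    apply LinearIndependent.of_comp Θ
    have : Θ ∘ b = A ∘ c := funext fun j => hb j
    rw [this]
    exact hc.map' A (LinearMap.ker_eq_bot.mpr hAinj)
  refine ⟨a, b, ha, hbli, ?_⟩
  -- coefficient identity via uniqueness
  have hzero : ∀ x : Fqn,
      ∑ i : Fin n, (f i - ∑ j : Fin r, b j ^ q ^ (i : ℕ) * a j) * x ^ q ^ (i : ℕ) = 0 := by
    intro x
    have key : φ x = ∑ i : Fin n, (∑ j : Fin r, b j ^ q ^ (i : ℕ) * a j) * x ^ q ^ (i : ℕ) := by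
      rw [hdecomp x]
      have : ∀ j : Fin r, algebraMap Fq Fqn (c j x) = S (b j * x) := by
        intro j
        have := congrFun (congrArg (fun (g : Fqn →ₗ[Fq] Fqn) => (g : Fqn → Fqn)) (hb j)) x
        simpa [hΘ, hA] using this.symm
      simp_rw [this, hS, mul_pow, Finset.sum_mul]
      rw [Finset.sum_comm]
      exact Finset.sum_congr rfl fun i _ => Finset.sum_congr rfl fun j _ => by ring
    have := hφ x
    rw [key] at this
    simp_rw [sub_mul, Finset.sum_sub_distrib, this]
    simp
  intro i
  have := qpoly_coeff_eq_zero (Fq := Fq) hcard _ hzero i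
  rwa [sub_eq_zero] at this
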